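/- Fix d ≥ 1 and n ≥ 1, and let ρ : {0,1,…,n−1} → ℝ^d be generic. If ρ' : {0,1,…,n−1} → ℝ^d satisfies ‖ρ'(i) − ρ'(j)‖ = ‖ρ(i) − ρ(j)‖ for all pairs i, j with 1 ≤ |i − j| ≤ d+1, then ρ' is congruent to ρ. In graph-theoretic language: the (d+1)-st power of a path is globally d-rigid. -/

import Mathlib

open Module Submodule MvPolynomial

/-- Polarization: inner products of differences are determined by norms of differences. -/
private lemma inner_eq_of_norms {E : Type*} [NormedAddCommGroup E] [InnerProductSpace ℝ E]
    {a b c a' b' c' : E} (h1 : ‖a' - c'‖ = ‖a - c‖) (h2 : ‖b' - c'‖ = ‖b - c‖)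
    (h3 : ‖a' - b'‖ = ‖a - b‖) :
    (inner ℝ (a' - c') (b' - c') : ℝ) = inner ℝ (a - c) (b - c) := by
  have e1 : (a - c) - (b - c) = a - b := by abel
  have e1' : (a' - c') - (b' - c') = a' - b' := by abel
  have n1 := norm_sub_sq_real (a - c) (b - c)
  have n1' := norm_sub_sq_real (a' - c') (b' - c')
  rw [e1] at n1
  rw [e1', h1, h2, h3] at n1'
  linarith

/-- A point is determined by its distances to a family of points whose differences span. -/
private lemma eq_of_norm_sub_eq_span {E : Type*} [NormedAddCommGroup E] [InnerProductSpace ℝ E]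
    {m : ℕ} {p : Fin (m + 1) → E}
    (hspan : Submodule.span ℝ (Set.range fun k : Fin m => p k.succ - p 0) = ⊤)
    {x y : E} (hdist : ∀ j, ‖x - p j‖ = ‖y - p j‖) : x = y := by
  have key : ∀ k : Fin m, (inner ℝ (x - y) (p k.succ - p 0) : ℝ) = 0 := by
    intro k
    have h1 : ‖x - p k.succ‖ ^ 2 = ‖y - p k.succ‖ ^ 2 := by rw [hdist]
    have h2 : ‖x - p 0‖ ^ 2 = ‖y - p 0‖ ^ 2 := by rw [hdist]
    rw [norm_sub_sq_real, norm_sub_sq_real (y := p k.succ)] at h1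
    rw [norm_sub_sq_real, norm_sub_sq_real (y := p 0)] at h2
    rw [inner_sub_left, inner_sub_right, inner_sub_right]
    linarith
  have hle : Submodule.span ℝ (Set.range fun k : Fin m => p k.succ - p 0) ≤
      LinearMap.ker (innerₛₗ ℝ (x - y)) := by
    rw [Submodule.span_le]
    rintro _ ⟨k, rfl⟩
    simp only [LinearMap.mem_ker, innerₛₗ_apply_apply, SetLike.mem_coe]
    simpa [inner_sub_left] using key k
  have hmem : x - y ∈ LinearMap.ker (innerₛₗ ℝ (x - y)) := by
    rw [hspan] at hle; exact hle trivial
  have : (inner ℝ (x - y) (x - y) : ℝ) = 0 := hmem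
  rw [inner_self_eq_zero] at this
  exact sub_eq_zero.mp this

/-- A linearly independent family can be mapped onto any family with the same Gram matrix
by a linear isometry equivalence of a finite-dimensional real inner product space. -/
private lemma exists_isometry_of_gram {E : Type*} [NormedAddCommGroup E] [InnerProductSpace ℝ E]
    [FiniteDimensional ℝ E] {m : ℕ} {u v : Fin m → E}
    (hu : LinearIndependent ℝ u)
    (hg : ∀ k l, (inner ℝ (v k) (v l) : ℝ) = inner ℝ (u k) (u l)) :
    ∃ T : E ≃ₗᵢ[ℝ] E, ∀ k, T (u k) = v k := by
  classical
  set S : Submodule ℝ E := Submodule.span ℝ (Set.range u) with hS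
  let b : Basis (Fin m) ℝ S := Basis.span hu
  let S₀ : S →ₗ[ℝ] E := b.constr ℝ v
  have hb : ∀ k, (b k : E) = u k := fun k => congrArg Subtype.val (Basis.span_apply hu k)
  have hS₀ : ∀ k, S₀ (b k) = v k := fun k => b.constr_basis ℝ v k
  have hinner : ∀ x y : S, (inner ℝ (S₀ x) (S₀ y) : ℝ) = inner ℝ (x : E) (y : E) := by
    have hBil : ((innerₗ E).compl₁₂ S₀ S₀ : S →ₗ[ℝ] S →ₗ[ℝ] ℝ)
        = (innerₗ E).compl₁₂ S.subtype S.subtype := by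
      apply b.ext; intro k
      apply b.ext; intro l
      simp only [LinearMap.compl₁₂_apply, innerₗ_apply_apply, hS₀,
        Submodule.coe_subtype, hb]
      exact hg k l
    intro x y
    have := DFunLike.congr_fun (DFunLike.congr_fun hBil x) y
    simpa only [LinearMap.compl₁₂_apply, innerₗ_apply_apply,
      Submodule.coe_subtype] using this
  let Li : S →ₗᵢ[ℝ] E :=
    ⟨S₀, fun x => by
      rw [@norm_eq_sqrt_real_inner, @norm_eq_sqrt_real_inner _ _ _ (x : S)]
      rw [hinner x x]
      rfl⟩
  let T : E ≃ₗᵢ[ℝ] E := Li.extend.toLinearIsometryEquiv rfl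
  refine ⟨T, fun k => ?_⟩
  have h1 : T (u k) = Li.extend (u k) := by
    rw [LinearIsometry.toLinearIsometryEquiv_apply]
  have h2 : u k = ((b k : S) : E) := (hb k).symm
  rw [h1, h2, LinearIsometry.extend_apply]
  show S₀ (b k) = v k
  exact hS₀ k

/-- Generic configurations have all small coordinate minors nonsingular, hence any
`m + 1 ≤ d + 1` of the points have linearly independent difference vectors. -/
private lemma generic_linearIndependent {d n : ℕ} {ρ : Fin n → EuclideanSpace ℝ (Fin d)}
    (hgen : AlgebraicIndependent ℚ (fun vi : Fin n × Fin d => ρ vi.1 vi.2))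
    {m : ℕ} (hm : m ≤ d) (g : Fin (m + 1) → Fin n) (hginj : Function.Injective g) :
    LinearIndependent ℝ (fun k : Fin m => ρ (g k.succ) - ρ (g 0)) := by
  classical
  set Mq : Matrix (Fin m) (Fin m) (MvPolynomial (Fin n × Fin d) ℚ) :=
    Matrix.of fun k l => X (g k.succ, Fin.castLE hm l) - X (g 0, Fin.castLE hm l) with hMq
  -- Mq.det is a nonzero polynomial: evaluate at a point giving the identity matrix
  set σ : Fin n × Fin d → ℚ :=
    fun p => if ∃ k : Fin m, p.1 = g k.succ ∧ p.2 = Fin.castLE hm k then 1 else 0 with hσdef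
  have hσmap : Mq.map (aeval σ) = 1 := by
    ext k l
    simp only [Matrix.map_apply, hMq, Matrix.of_apply, map_sub, aeval_X]
    have h2 : σ (g 0, Fin.castLE hm l) = 0 := by
      simp only [hσdef]; rw [if_neg]
      rintro ⟨k', hk', -⟩
      exact Fin.succ_ne_zero k' (hginj hk'.symm)
    by_cases hkl : k = l
    · subst hkl
      have h1 : σ (g k.succ, Fin.castLE hm k) = 1 := by
        simp only [hσdef]; rw [if_pos ⟨k, rfl, rfl⟩]
      rw [h1, h2, Matrix.one_apply_eq]; ring
    · have h1 : σ (g k.succ, Fin.castLE hm l) = 0 := by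
        simp only [hσdef]; rw [if_neg]
        rintro ⟨k', hk', hl'⟩
        apply hkl
        have hk : k = k' := Fin.succ_injective _ (hginj hk')
        have hl : l = k' := Fin.castLE_injective hm hl'
        rw [hk, hl]
      rw [h1, h2, Matrix.one_apply_ne hkl]; ring
  have hdetne : Mq.det ≠ 0 := by
    intro h0
    have := (aeval σ).map_det Mq
    rw [h0] at this
    rw [show (aeval σ).mapMatrix Mq = Mq.map (aeval σ) from rfl, hσmap] at this
    simp at this
  -- the real matrix of coordinates
  set v : Fin n × Fin d → ℝ := fun vi => ρ vi.1 vi.2 with hv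
  set M : Matrix (Fin m) (Fin m) ℝ := Mq.map (aeval v) with hM
  have hMdet : M.det ≠ 0 := by
    intro h0
    apply hdetne
    apply hgen
    rw [map_zero]
    have := (aeval v).map_det Mq
    rw [show (aeval v).mapMatrix Mq = Mq.map (aeval v) from rfl, ← hM, h0] at this
    exact this
  have hrows : LinearIndependent ℝ (fun k => M k) :=
    Matrix.linearIndependent_rows_iff_isUnit.mpr
      (Matrix.isUnit_iff_isUnit_det M |>.mpr (isUnit_iff_ne_zero.mpr hMdet))
  -- transfer to EuclideanSpace via coordinate projection
  let π : EuclideanSpace ℝ (Fin d) →ₗ[ℝ] (Fin m → ℝ) :=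
    LinearMap.pi fun l => (LinearMap.proj (Fin.castLE hm l)).comp
      (WithLp.linearEquiv 2 ℝ (Fin d → ℝ)).toLinearMap
  apply LinearIndependent.of_comp π
  have : (π ∘ fun k : Fin m => ρ (g k.succ) - ρ (g 0)) = fun k => M k := by
    funext k
    ext l
    simp [π, hM, hMq, hv, Matrix.map_apply, map_sub, aeval_X, PiLp.sub_apply]
  rw [this]
  exact hrows

/-- The `(d+1)`-st power of a path is globally `d`-rigid: if `ρ : {0,…,n-1} → ℝ^d` is
generic and `ρ'` has the same distances as `ρ` for all pairs `i, j` with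
`1 ≤ |i - j| ≤ d + 1`, then `ρ'` is congruent to `ρ`. -/
theorem path_power_globally_rigid (d n : ℕ) (hd : 1 ≤ d) (hn : 1 ≤ n)
    (ρ ρ' : Fin n → EuclideanSpace ℝ (Fin d))
    (hgen : AlgebraicIndependent ℚ (fun vi : Fin n × Fin d => ρ vi.1 vi.2))
    (h : ∀ i j : Fin n, 1 ≤ |(i : ℤ) - (j : ℤ)| → |(i : ℤ) - (j : ℤ)| ≤ d + 1 →
      ‖ρ' i - ρ' j‖ = ‖ρ i - ρ j‖) :
    ∃ f : EuclideanSpace ℝ (Fin d) ≃ᵢ EuclideanSpace ℝ (Fin d), ρ' = ⇑f ∘ ρ := by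
  classical
  have hmdef : min (n - 1) d ≤ d := min_le_right _ _
  set m : ℕ := min (n - 1) d with hm_def
  have hm : m ≤ d := min_le_right _ _
  have hmn : m + 1 ≤ n := by omega
  let g0 : Fin (m + 1) → Fin n := fun j => ⟨j.1, lt_of_lt_of_le j.2 hmn⟩
  have hg0inj : Function.Injective g0 := fun a b hab => Fin.ext (congrArg Fin.val hab :)
  have hu : LinearIndependent ℝ (fun k : Fin m => ρ (g0 k.succ) - ρ (g0 0)) :=
    generic_linearIndependent hgen hm g0 hg0inj
  -- agreement of distances among the first `m + 1` vertices
  have hD : ∀ a b : Fin (m + 1), a ≠ b →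
      ‖ρ' (g0 a) - ρ' (g0 b)‖ = ‖ρ (g0 a) - ρ (g0 b)‖ := by
    intro a b hab
    have hvals : ((g0 a : Fin n) : ℕ) = (a : ℕ) ∧ ((g0 b : Fin n) : ℕ) = (b : ℕ) := ⟨rfl, rfl⟩
    have hne : (a : ℕ) ≠ (b : ℕ) := fun hh => hab (Fin.ext hh)
    have ha := a.2
    have hb := b.2
    apply h
    · rw [Int.abs_eq_natAbs]
      omega
    · rw [Int.abs_eq_natAbs]
      omega
  -- equal Gram matrices
  have hg : ∀ k l : Fin m, (inner ℝ (ρ' (g0 k.succ) - ρ' (g0 0)) (ρ' (g0 l.succ) - ρ' (g0 0)) : ℝ)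
      = inner ℝ (ρ (g0 k.succ) - ρ (g0 0)) (ρ (g0 l.succ) - ρ (g0 0)) := by
    intro k l
    refine inner_eq_of_norms (hD _ _ (Fin.succ_ne_zero k)) (hD _ _ (Fin.succ_ne_zero l)) ?_
    by_cases hkl : k = l
    · subst hkl; rw [sub_self, sub_self]
    · exact hD _ _ (fun hh => hkl (Fin.succ_injective _ hh))
  obtain ⟨T, hT⟩ := exists_isometry_of_gram hu hg
  let i0 : Fin n := g0 0
  let f : EuclideanSpace ℝ (Fin d) ≃ᵢ EuclideanSpace ℝ (Fin d) :=
    { toFun := fun x => T (x - ρ i0) + ρ' i0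
      invFun := fun y => T.symm (y - ρ' i0) + ρ i0
      left_inv := fun x => by simp
      right_inv := fun y => by simp
      isometry_toFun := by
        apply Isometry.of_dist_eq
        intro x y
        rw [dist_add_right, dist_eq_norm, dist_eq_norm, ← map_sub, T.norm_map]
        congr 1
        abel }
  have hf : ∀ x, f x = T (x - ρ i0) + ρ' i0 := fun _ => rfl
  have key : ∀ N : ℕ, ∀ i : Fin n, (i : ℕ) = N → ρ' i = f (ρ i) := by
    intro N
    induction N using Nat.strong_induction_on with
    | _ N ih =>
    intro i hiN
    by_cases hsmall : (i : ℕ) ≤ m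
    · rcases Nat.eq_zero_or_pos (i : ℕ) with h0 | hpos
      · have hi0 : i = i0 := Fin.ext (show (i : ℕ) = 0 from h0)
        rw [hi0, hf, sub_self, map_zero, zero_add]
      · have hkm : (i : ℕ) - 1 < m := by omega
        set k : Fin m := ⟨(i : ℕ) - 1, hkm⟩ with hk
        have hik : i = g0 k.succ := Fin.ext (show (i : ℕ) = ((i : ℕ) - 1) + 1 by omega)
        rw [hik, hf]
        have hsub : ρ (g0 k.succ) - ρ i0 = ρ (g0 k.succ) - ρ (g0 0) := rfl
        rw [hsub, hT k]
        show ρ' (g0 k.succ) = ρ' (g0 k.succ) - ρ' (g0 0) + ρ' (g0 0)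
        abel
    · -- inductive step: here `m = d` and `i ≥ d + 1`
      have hin : (i : ℕ) < n := i.2
      have hid : d + 1 ≤ (i : ℕ) := by omega
      set bb : ℕ := (i : ℕ) - (d + 1) with hbb
      let g1 : Fin (d + 1) → Fin n := fun j => ⟨bb + j.1, by have := j.2; omega⟩
      have hg1val : ∀ j : Fin (d + 1), ((g1 j : Fin n) : ℕ) = bb + (j : ℕ) := fun _ => rfl
      have hg1inj : Function.Injective g1 := by
        intro a b hab
        have := congrArg Fin.val hab
        simp only [hg1val] at this
        exact Fin.ext (by omega)
      have hlin := generic_linearIndependent hgen (le_refl d) g1 hg1inj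
      have hspan : Submodule.span ℝ
          (Set.range fun k : Fin d => ρ (g1 k.succ) - ρ (g1 0)) = ⊤ := by
        haveI : Nonempty (Fin d) := ⟨⟨0, hd⟩⟩
        exact hlin.span_eq_top_of_card_eq_finrank (by simp [finrank_euclideanSpace_fin])
      have hprev : ∀ j : Fin (d + 1), ρ (g1 j) = f.symm (ρ' (g1 j)) := by
        intro j
        have hj := j.2
        have hlt : ((g1 j : Fin n) : ℕ) < N := by rw [hg1val]; omega
        rw [ih _ hlt (g1 j) rfl]
        exact (f.symm_apply_apply _).symm
      have hdist : ∀ j : Fin (d + 1), ‖f.symm (ρ' i) - ρ (g1 j)‖ = ‖ρ i - ρ (g1 j)‖ := by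
        intro j
        have hj := j.2
        have hgj := hg1val j
        calc ‖f.symm (ρ' i) - ρ (g1 j)‖
            = dist (f.symm (ρ' i)) (f.symm (ρ' (g1 j))) := by rw [hprev j, dist_eq_norm]
          _ = dist (ρ' i) (ρ' (g1 j)) := f.symm.dist_eq _ _
          _ = ‖ρ' i - ρ' (g1 j)‖ := dist_eq_norm _ _
          _ = ‖ρ i - ρ (g1 j)‖ := ?_
        apply h
        · rw [Int.abs_eq_natAbs]; omega
        · rw [Int.abs_eq_natAbs]; omega
      have heq : f.symm (ρ' i) = ρ i :=
        eq_of_norm_sub_eq_span (p := fun j => ρ (g1 j)) hspan hdist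
      rw [← heq, f.apply_symm_apply]
  exact ⟨f, funext fun i => key (i : ℕ) i rfl⟩
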